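/- Let d ≥ 2 be an integer, ℓ ∈ ℕ_d, and x ∈ (−1,1). Then Σ_{m ∈ ℕ_{d−1}, m ≤ ℓ} (1−x²)^{−(d−2)/2} Y_{ℓ,m}(x)² · D_{d−1}(m)/σ_{d−1} = D_d(ℓ)/σ_d, where for an integer k ≥ 1 and m ∈ ℕ_k with m' = m − (k−1)/2 ∈ ℕ one sets D_k(m) = binom(m'+k, m') − binom(m'+k−2, m'−2) (with the convention that a binomial coefficient with a negative lower index is zero), and σ_k = (k+1)π^{(k+1)/2}/Γ((k+3)/2). -/

import Mathlib

open Real Set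

/-- Jacobi polynomial `P_j^{(α,α)}` via Rodrigues' formula. -/
noncomputable def jacobiP (j : ℕ) (α : ℝ) (x : ℝ) : ℝ :=
  ((-1 : ℝ) ^ j / (2 ^ j * (Nat.factorial j : ℝ))) * (1 - x ^ 2) ^ (-α) *
    iteratedDeriv j (fun t : ℝ => (1 - t ^ 2) ^ (α + (j : ℝ))) x

/-- The normalization constant `c_{ℓm}`. -/
noncomputable def cConst (ℓ m : ℝ) : ℝ :=
  Real.sqrt (ℓ * Real.Gamma (ℓ - m + 1/2) * Real.Gamma (ℓ + m + 1/2)) /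
    ((2 : ℝ) ^ m * Real.Gamma (ℓ + 1/2))

/-- The function `Y_{ℓ,m}`. -/
noncomputable def Yfun (ℓ m x : ℝ) : ℝ :=
  cConst ℓ m * (1 - x ^ 2) ^ (m / 2) * jacobiP ⌊ℓ - m - 1/2⌋₊ m x

/-- Membership in the index set `I = {(ℓ,m) ∈ (ℕ/2)² : ℓ - m - 1/2 ∈ ℕ}`. -/
def memI (ℓ m : ℝ) : Prop :=
  (∃ n : ℕ, m = (n : ℝ) / 2) ∧ (∃ j : ℕ, ℓ - m - 1/2 = (j : ℝ))

/-- `b_{ℓ,m} = m / ℓ`. -/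
noncomputable def bPt (ℓ m : ℝ) : ℝ := m / ℓ

/-- `a_{ℓ,m} = (1 - b_{ℓ,m}²)^{1/2}`. -/
noncomputable def aPt (ℓ m : ℝ) : ℝ := Real.sqrt (1 - bPt ℓ m ^ 2)

/-- Membership in `ℕ_k = ℕ + (k-1)/2`. -/
def memNk (k : ℕ) (t : ℝ) : Prop := ∃ n : ℕ, t = (n : ℝ) + ((k : ℝ) - 1) / 2

/-- Membership in `I_d`. -/
def memId (d : ℕ) (ℓ m : ℝ) : Prop := memNk d ℓ ∧ memNk (d - 1) m ∧ m ≤ ℓ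

/-- The function `X̃^d_{ℓ,m}`. -/
noncomputable def Xtilde (d : ℕ) (ℓ m x : ℝ) : ℝ :=
  (1 - x ^ 2) ^ (-((d : ℝ) - 2) / 4) * Yfun ℓ m x

/-- The dimension `D_k(m)` of spherical harmonics, as a function of `k` and of
`m' = m - (k-1)/2 ∈ ℕ`, with the convention that a binomial coefficient with
negative lower index is zero. -/
noncomputable def Dk (k : ℕ) (m' : ℕ) : ℝ :=
  (Nat.choose (m' + k) m' : ℝ) -
    (if 2 ≤ m' then (Nat.choose (m' + k - 2) (m' - 2) : ℝ) else 0)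

/-- The surface measure `σ_k` of the unit sphere in `ℝ^{1+k}`. -/
noncomputable def sigmaS (k : ℕ) : ℝ :=
  ((k : ℝ) + 1) * Real.pi ^ (((k : ℝ) + 1) / 2) / Real.Gamma (((k : ℝ) + 3) / 2)


noncomputable def poch (p : ℝ) : ℕ → ℝ
  | 0 => 1
  | i+1 => poch p i * (p - i)

noncomputable def AF (p : ℝ) (i : ℕ) (x : ℝ) : ℝ := (-1)^i * poch p i * (1 - x) ^ (p - i)
noncomputable def BF (p : ℝ) (i : ℕ) (x : ℝ) : ℝ := poch p i * (1 + x) ^ (p - i)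

lemma AF_hasDeriv (p : ℝ) (i : ℕ) {x : ℝ} (hx : x ∈ Ioo (-1:ℝ) 1) :
    HasDerivAt (AF p i) (AF p (i+1) x) x := by
  have h1 : (0:ℝ) < 1 - x := by linarith [hx.2]
  have hbase : HasDerivAt (fun y : ℝ => 1 - y) (-1) x := by
    simpa using (hasDerivAt_id x).const_sub 1
  have h2 := hbase.rpow_const (p := p - i) (Or.inl (ne_of_gt h1))
  have h3 := h2.const_mul ((-1:ℝ)^i * poch p i)
  have h4 : AF p (i+1) x = ((-1:ℝ)^i * poch p i) * (-1 * (p - (i:ℝ)) * (1-x)^(p-(i:ℝ)-1)) := by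
    simp only [AF, poch]
    rw [show p - ((i:ℕ)+1 : ℕ) = p - (i:ℝ) - 1 by push_cast; ring, pow_succ]
    ring
  rw [h4]
  exact h3

lemma BF_hasDeriv (p : ℝ) (i : ℕ) {x : ℝ} (hx : x ∈ Ioo (-1:ℝ) 1) :
    HasDerivAt (BF p i) (BF p (i+1) x) x := by
  have h1 : (0:ℝ) < 1 + x := by linarith [hx.1]
  have hbase : HasDerivAt (fun y : ℝ => 1 + y) (1) x := by
    simpa using (hasDerivAt_id x).const_add 1
  have h2 := hbase.rpow_const (p := p - i) (Or.inl (ne_of_gt h1))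
  have h3 := h2.const_mul (poch p i)
  have h4 : BF p (i+1) x = (poch p i) * (1 * (p - (i:ℝ)) * (1+x)^(p-(i:ℝ)-1)) := by
    simp only [BF, poch]
    rw [show p - ((i:ℕ)+1 : ℕ) = p - (i:ℝ) - 1 by push_cast; ring]
    ring
  rw [h4]
  exact h3

lemma iter_formula (p : ℝ) (k : ℕ) :
    ∀ x ∈ Ioo (-1:ℝ) 1, iteratedDeriv k (fun t : ℝ => (1 - t^2) ^ p) x
      = ∑ i ∈ Finset.range (k+1), (k.choose i : ℝ) * AF p i x * BF p (k-i) x := by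
  induction k with
  | zero =>
    intro x hx
    have h1 : (0:ℝ) < 1 - x := by linarith [hx.2]
    have h2 : (0:ℝ) < 1 + x := by linarith [hx.1]
    rw [iteratedDeriv_zero, Finset.sum_range_one]
    simp only [Nat.choose_self, Nat.cast_one, AF, BF, poch, Nat.sub_zero, Nat.cast_zero,
      sub_zero, pow_zero, one_mul, mul_one]
    rw [show (1 : ℝ) - x^2 = (1-x)*(1+x) by ring, Real.mul_rpow h1.le h2.le]
  | succ k ih =>
    intro x hx
    rw [iteratedDeriv_succ]
    have hev : iteratedDeriv k (fun t : ℝ => (1 - t^2)^p)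
        =ᶠ[nhds x] (fun y => ∑ i ∈ Finset.range (k+1),
          (k.choose i : ℝ) * AF p i y * BF p (k-i) y) := by
      filter_upwards [Ioo_mem_nhds hx.1 hx.2] with y hy using ih y hy
    rw [hev.deriv_eq]
    have hsum : HasDerivAt (fun y => ∑ i ∈ Finset.range (k+1),
        (k.choose i : ℝ) * AF p i y * BF p (k-i) y)
        (∑ i ∈ Finset.range (k+1), (k.choose i : ℝ) *
          (AF p (i+1) x * BF p (k-i) x + AF p i x * BF p (k-i+1) x)) x := by
      apply HasDerivAt.fun_sum
      intro i _
      have hA := AF_hasDeriv p i hx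
      have hB := BF_hasDeriv p (k-i) hx
      have := ((hA.mul hB).const_mul ((k.choose i : ℝ)))
      simpa [mul_assoc] using this
    rw [hsum.deriv]
    -- combinatorial recombination
    have key : ∀ i ∈ Finset.range (k+1), (k.choose i : ℝ) *
          (AF p (i+1) x * BF p (k-i) x + AF p i x * BF p (k-i+1) x)
        = (k.choose i : ℝ) * AF p (i+1) x * BF p (k-i) x
          + (k.choose i : ℝ) * AF p i x * BF p (k+1-i) x := by
      intro i hi
      have hik : i ≤ k := Nat.lt_succ_iff.mp (Finset.mem_range.mp hi)
      rw [show k - i + 1 = k + 1 - i from (Nat.succ_sub hik).symm]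
      ring
    rw [Finset.sum_congr rfl key, Finset.sum_add_distrib]
    -- RHS
    rw [Finset.sum_range_succ' (fun i => ((k+1).choose i : ℝ) * AF p i x * BF p (k+1-i) x)]
    simp only [Nat.choose_succ_succ, Nat.cast_add, Nat.succ_sub_succ_eq_sub, Nat.choose_zero_right,
      Nat.cast_one, Nat.sub_zero]
    rw [Finset.sum_congr rfl (fun i _ => by ring :
      ∀ i ∈ Finset.range (k+1), ((k.choose i : ℝ) + (k.choose (i+1) : ℝ)) * AF p (i+1) x * BF p (k-i) x
        = (k.choose i : ℝ) * AF p (i+1) x * BF p (k-i) x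
          + (k.choose (i+1) : ℝ) * AF p (i+1) x * BF p (k-i) x), Finset.sum_add_distrib]
    -- second LHS sum: peel i = 0
    rw [Finset.sum_range_succ' (fun i => (k.choose i : ℝ) * AF p i x * BF p (k+1-i) x)]
    -- now: Σ A_{i+1} stuff + (Σ_{range k} C(k,i+1) A_{i+1} B_{k+1-(i+1)} + C(k,0) A_0 B_{k+1})
    --    = Σ C(k,i) A_{i+1} B_{k-i} + Σ_{range (k+1)} C(k,i+1) A_{i+1} B_{k-i} + 1 * A_0 * B_{k+1}
    rw [Finset.sum_range_succ (fun i => (k.choose (i+1) : ℝ) * AF p (i+1) x * BF p (k-i) x)]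
    simp only [Nat.choose_succ_self, Nat.cast_zero, Nat.succ_sub_succ_eq_sub, Nat.choose_zero_right,
      Nat.cast_one, Nat.sub_zero, Nat.sub_self]
    ring
noncomputable def ccoef (j : ℕ) (α : ℝ) (i : ℕ) : ℝ :=
  (-1:ℝ)^(j-i) / (2^j * (j.factorial : ℝ)) * (j.choose i) * poch (α + j) i * poch (α + j) (j - i)

noncomputable def Pexp (j : ℕ) (α : ℝ) (x : ℝ) : ℝ :=
  ∑ i ∈ Finset.range (j+1), ccoef j α i * (1-x)^(j-i) * (1+x)^i

lemma pexp_zero (α x : ℝ) : Pexp 0 α x = 1 := by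
  simp [Pexp, ccoef, poch]

lemma jacobiP_eq (j : ℕ) (α : ℝ) {x : ℝ} (hx : x ∈ Ioo (-1:ℝ) 1) :
    jacobiP j α x = Pexp j α x := by
  have h1 : (0:ℝ) < 1 - x := by linarith [hx.2]
  have h2 : (0:ℝ) < 1 + x := by linarith [hx.1]
  rw [jacobiP, iter_formula (α + j) j x hx, Pexp, Finset.mul_sum]
  apply Finset.sum_congr rfl
  intro i hi
  have hij : i ≤ j := Nat.lt_succ_iff.mp (Finset.mem_range.mp hi)
  simp only [AF, BF, ccoef]
  have e2 : ((1-x):ℝ)^((j-i : ℕ)) = (1-x)^(-α) * (1-x)^(α + (j:ℝ) - (i:ℝ)) := by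
    rw [← Real.rpow_natCast (1-x) (j-i), ← Real.rpow_add h1, Nat.cast_sub hij]
    congr 1; ring
  have e3 : ((1+x):ℝ)^(i:ℕ) = (1+x)^(-α) * (1+x)^(α + (j:ℝ) - ((j - i : ℕ):ℝ)) := by
    rw [← Real.rpow_natCast (1+x) i, ← Real.rpow_add h2, Nat.cast_sub hij]
    congr 1; ring
  have e1 : ((1:ℝ) - x^2) ^ (-α) = (1-x)^(-α) * (1+x)^(-α) := by
    rw [show (1:ℝ) - x^2 = (1-x)*(1+x) by ring, Real.mul_rpow h1.le h2.le]
  have esign : ((-1:ℝ))^(j-i) = (-1)^j * (-1)^i := by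
    have hsq : ((-1:ℝ))^i * (-1)^i = 1 := by
      rw [← pow_add, ← two_mul, pow_mul]; norm_num
    calc ((-1:ℝ))^(j-i) = (-1)^(j-i) * ((-1)^i * (-1)^i) := by rw [hsq, mul_one]
    _ = ((-1:ℝ))^(j-i+i) * (-1)^i := by rw [pow_add]; ring
    _ = _ := by rw [Nat.sub_add_cancel hij]
  rw [e1, e2, e3, esign]
  ring

lemma pexp_term_hasDeriv (c : ℝ) (a b : ℕ) (x : ℝ) :
    HasDerivAt (fun y : ℝ => c * (1-y)^a * (1+y)^b)
      (c * (-(a:ℝ) * (1-x)^(a-1) * (1+x)^b + (b:ℝ) * (1-x)^a * (1+x)^(b-1))) x := by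
  have hm : HasDerivAt (fun y : ℝ => 1 - y) (-1) x := by
    simpa using (hasDerivAt_id x).const_sub 1
  have hp : HasDerivAt (fun y : ℝ => 1 + y) 1 x := by
    simpa using (hasDerivAt_id x).const_add 1
  have h1 := hm.pow a
  have h2 := hp.pow b
  have := ((h1.const_mul c).mul h2)
  refine this.congr_deriv ?_
  simp only [Pi.pow_apply]
  ring

lemma pexp_hasDerivAt_raw (j : ℕ) (α : ℝ) (x : ℝ) :
    HasDerivAt (Pexp j α)
      (∑ i ∈ Finset.range (j+1), ccoef j α i *
        (-((j-i : ℕ):ℝ) * (1-x)^(j-i-1) * (1+x)^i + (i:ℝ) * (1-x)^(j-i) * (1+x)^(i-1))) x := by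
  apply HasDerivAt.fun_sum
  intro i _
  exact pexp_term_hasDeriv (ccoef j α i) (j-i) i x

lemma pexp_differentiable (j : ℕ) (α : ℝ) : Differentiable ℝ (Pexp j α) :=
  fun x => (pexp_hasDerivAt_raw j α x).differentiableAt

lemma pexp_continuous (j : ℕ) (α : ℝ) : Continuous (Pexp j α) :=
  (pexp_differentiable j α).continuous

lemma ccoef_key (j i : ℕ) (α : ℝ) (hij : i ≤ j) :
    ccoef (j+1) α i * (-(((j+1)-i : ℕ):ℝ)) + ccoef (j+1) α (i+1) * ((i:ℝ)+1)
      = ((2*α + (j:ℝ) + 2)/2) * ccoef j (α+1) i := by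
  obtain ⟨q, rfl⟩ : ∃ q, j = i + q := ⟨j - i, (Nat.add_sub_cancel' hij).symm⟩
  have hc1n : (i+q+1).choose i * (q+1) = (i+q+1) * ((i+q).choose i) := by
    have h := Nat.choose_mul_succ_eq (i+q) i
    have h2 : i + q + 1 - i = q + 1 := by omega
    rw [h2] at h
    rw [← h]; ring
  have hc1 : (((i+q+1).choose i:ℝ))*((q:ℝ)+1) = ((i:ℝ)+(q:ℝ)+1)*(((i+q).choose i:ℝ)) := by
    exact_mod_cast congrArg (Nat.cast : ℕ → ℝ) hc1n
  have hc2n : (i+1) * ((i+q+1).choose (i+1)) = (i+q+1) * ((i+q).choose i) := by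
    have h := Nat.add_one_mul_choose_eq (i+q) i
    rw [h]; ring
  have hc2 : ((i:ℝ)+1)*(((i+q+1).choose (i+1):ℝ)) = ((i:ℝ)+(q:ℝ)+1)*(((i+q).choose i:ℝ)) := by
    exact_mod_cast congrArg (Nat.cast : ℕ → ℝ) hc2n
  set p : ℝ := α + ((i:ℝ) + (q:ℝ) + 1) with hpdef
  have hC : (((i+q+1).choose i:ℝ))*((q:ℝ)+1)*(p-(q:ℝ))
        + (((i+q+1).choose (i+1):ℝ))*((i:ℝ)+1)*(p-(i:ℝ))
      = ((i:ℝ)+(q:ℝ)+1)*(((i+q).choose i:ℝ))*(2*α+(i:ℝ)+(q:ℝ)+2) := by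
    linear_combination (p-(q:ℝ))*hc1 + (p-(i:ℝ))*hc2
  simp only [ccoef, Nat.add_sub_cancel_left, show i+q+1-i = q+1 by omega,
    show i+q+1-(i+1) = q by omega, show i+q-i = q by omega, poch, Nat.factorial_succ, pow_succ]
  have hp : (α+1) + ((i+q:ℕ):ℝ) = p := by rw [hpdef]; push_cast; ring
  have hp2 : α + ((i+q+1:ℕ):ℝ) = p := by rw [hpdef]; push_cast; ring
  rw [hp, hp2]
  push_cast
  have hfac : ((i+q).factorial : ℝ) ≠ 0 := Nat.cast_ne_zero.mpr (Nat.factorial_ne_zero _)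
  have h2i : (2:ℝ)^i ≠ 0 := by positivity
  have h2q : (2:ℝ)^q ≠ 0 := by positivity
  have hiq : ((i:ℝ)+(q:ℝ)+1) ≠ 0 := by positivity
  field_simp
  linear_combination (poch p i * poch p q) * hC
lemma pexp_raise (j : ℕ) (α : ℝ) (x : ℝ) :
    HasDerivAt (Pexp (j+1) α) (((2*α + (j:ℝ) + 2)/2) * Pexp j (α+1) x) x := by
  have h := pexp_hasDerivAt_raw (j+1) α x
  convert h using 1
  rw [Pexp, Finset.mul_sum]
  have split : ∀ i ∈ Finset.range (j+2), ccoef (j+1) α i *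
        (-(((j+1-i : ℕ)):ℝ) * (1-x)^(j+1-i-1) * (1+x)^i + (i:ℝ) * (1-x)^(j+1-i) * (1+x)^(i-1))
      = (ccoef (j+1) α i * (-(((j+1-i : ℕ)):ℝ)) * (1-x)^(j+1-i-1) * (1+x)^i)
        + (ccoef (j+1) α i * (i:ℝ) * (1-x)^(j+1-i) * (1+x)^(i-1)) := by
    intro i _; ring
  rw [Finset.sum_congr rfl split, Finset.sum_add_distrib]
  rw [Finset.sum_range_succ
    (fun i => ccoef (j+1) α i * (-(((j+1-i : ℕ)):ℝ)) * (1-x)^(j+1-i-1) * (1+x)^i)]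
  rw [Finset.sum_range_succ'
    (fun i => ccoef (j+1) α i * (i:ℝ) * (1-x)^(j+1-i) * (1+x)^(i-1))]
  simp only [Nat.sub_self, Nat.cast_zero, neg_zero, mul_zero, zero_mul, add_zero, Nat.cast_ofNat]
  rw [← Finset.sum_add_distrib]
  apply Finset.sum_congr rfl
  intro i hi
  have hij : i ≤ j := Nat.lt_succ_iff.mp (Finset.mem_range.mp hi)
  have e1 : j + 1 - i - 1 = j - i := by omega
  have e2 : j + 1 - (i+1) = j - i := by omega
  have e3 : i + 1 - 1 = i := by omega
  rw [e1, e2, e3, show j+1-i = (j-i)+1 by omega]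
  push_cast [Nat.cast_sub hij]
  have key := ccoef_key j i α hij
  rw [show ((j:ℕ)+1) - i = (j-i)+1 by omega] at key
  push_cast [Nat.cast_sub hij] at key
  linear_combination (-(1-x)^(j-i)*(1+x)^i) * key
lemma pexp_lower (j : ℕ) (α : ℝ) {x : ℝ} (hx : x ∈ Ioo (-1:ℝ) 1) :
    HasDerivAt (fun y => (1 - y^2)^α * Pexp j α y)
      (-2*((j:ℝ)+1) * (1-x^2)^(α-1) * Pexp (j+1) (α-1) x) x := by
  have h0x : (0:ℝ) < 1 - x^2 := by nlinarith [hx.1, hx.2]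
  set κj : ℝ := ((-1:ℝ)^j / (2^j * (j.factorial:ℝ))) with hκj
  have hκne : κj ≠ 0 := by
    rw [hκj]
    have h1 : ((j.factorial:ℝ)) ≠ 0 := Nat.cast_ne_zero.mpr (Nat.factorial_ne_zero _)
    have h2 : (2:ℝ)^j ≠ 0 := by positivity
    have h3 : ((-1:ℝ))^j ≠ 0 := by
      rcases Nat.even_or_odd j with he | ho
      · rw [he.neg_one_pow]; norm_num
      · rw [ho.neg_one_pow]; norm_num
    positivity
  set f : ℝ → ℝ := fun t : ℝ => (1 - t^2)^(α + (j:ℝ)) with hf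
  -- equality on Ioo
  have hU : ∀ y ∈ Ioo (-1:ℝ) 1, iteratedDeriv j f y = κj⁻¹ * ((1 - y^2)^α * Pexp j α y) := by
    intro y hy
    have h0 : (0:ℝ) < 1 - y^2 := by nlinarith [hy.1, hy.2]
    have hcancel : ((1:ℝ) - y^2)^α * ((1 - y^2)^(-α)) = 1 := by
      rw [← Real.rpow_add h0]; norm_num
    rw [← jacobiP_eq j α hy, jacobiP, ← hκj, ← hf]
    rw [show ((1:ℝ) - y^2)^α * (κj * (1 - y^2)^(-α) * iteratedDeriv j f y)
        = (((1:ℝ) - y^2)^α * ((1 - y^2)^(-α))) * (κj * iteratedDeriv j f y) from by ring]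
    rw [hcancel, one_mul, ← mul_assoc, inv_mul_cancel₀ hκne, one_mul]
  -- differentiability of the nice function
  have hbase : HasDerivAt (fun y : ℝ => 1 - y^2) (-(2*x)) x := by
    simpa using ((hasDerivAt_pow 2 x).const_sub 1)
  have hrp := hbase.rpow_const (p := α) (Or.inl (ne_of_gt h0x))
  have hP := pexp_hasDerivAt_raw j α x
  obtain ⟨W, hW⟩ : ∃ W, HasDerivAt (fun y => ((1:ℝ) - y^2)^α * Pexp j α y) W x :=
    ⟨_, hrp.mul hP⟩
  -- transfer derivative to iteratedDeriv j f
  have hev : (fun y => κj⁻¹ * ((1 - y^2)^α * Pexp j α y)) =ᶠ[nhds x] iteratedDeriv j f := by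
    filter_upwards [Ioo_mem_nhds hx.1 hx.2] with y hy using (hU y hy).symm
  have hD : HasDerivAt (iteratedDeriv j f) (κj⁻¹ * W) x :=
    ((hW.const_mul κj⁻¹)).congr_of_eventuallyEq hev.symm
  have hsucc : iteratedDeriv (j+1) f x = κj⁻¹ * W := by
    rw [iteratedDeriv_succ]; exact hD.deriv
  -- explicit formula at level j+1
  have hgf : (fun t : ℝ => (1 - t^2)^((α-1) + ((j:ℝ)+1))) = f := by
    funext t; rw [hf]; congr 1; ring
  have hj1 : Pexp (j+1) (α-1) x
      = ((-1:ℝ)^(j+1) / (2^(j+1) * ((j+1).factorial:ℝ))) * (1-x^2)^(-(α-1))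
        * iteratedDeriv (j+1) f x := by
    rw [← jacobiP_eq (j+1) (α-1) hx, jacobiP, ← hgf]
    norm_num
  -- final assembly
  have hκκ : -2*((j:ℝ)+1) * ((-1:ℝ)^(j+1) / (2^(j+1) * ((j+1).factorial:ℝ))) = κj := by
    have hfa : (((j+1).factorial:ℕ):ℝ) = ((j:ℝ)+1) * (j.factorial:ℝ) := by
      push_cast [Nat.factorial_succ]; ring
    have h1 : ((j.factorial:ℝ)) ≠ 0 := Nat.cast_ne_zero.mpr (Nat.factorial_ne_zero _)
    rw [hκj, hfa, pow_succ, pow_succ]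
    field_simp
  have hcancel2 : ((1:ℝ) - x^2)^(α-1) * ((1 - x^2)^(-(α-1))) = 1 := by
    rw [← Real.rpow_add h0x]; norm_num
  have : -2*((j:ℝ)+1) * (1-x^2)^(α-1) * Pexp (j+1) (α-1) x = W := by
    rw [hj1]
    calc -2*((j:ℝ)+1) * (1-x^2)^(α-1) *
          (((-1:ℝ)^(j+1) / (2^(j+1) * ((j+1).factorial:ℝ))) * (1-x^2)^(-(α-1))
            * iteratedDeriv (j+1) f x)
        = (-2*((j:ℝ)+1) * ((-1:ℝ)^(j+1) / (2^(j+1) * ((j+1).factorial:ℝ))))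
          * (((1:ℝ) - x^2)^(α-1) * ((1 - x^2)^(-(α-1)))) * iteratedDeriv (j+1) f x := by ring
      _ = κj * iteratedDeriv (j+1) f x := by rw [hκκ, hcancel2]; ring
      _ = κj * (κj⁻¹ * W) := by rw [hsucc]
      _ = W := by field_simp
  rw [this]
  exact hW
lemma pexp_star (j : ℕ) (α : ℝ) {x : ℝ} (hx : x ∈ Ioo (-1:ℝ) 1) :
    (1-x^2) * ((2*α + (j:ℝ) + 2)/2) * Pexp j (α+1) x
      = 2*α*x*Pexp (j+1) α x - 2*((j:ℝ)+2)*Pexp (j+2) (α-1) x := by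
  have h0x : (0:ℝ) < 1 - x^2 := by nlinarith [hx.1, hx.2]
  have hlow := pexp_lower (j+1) α hx
  have hbase : HasDerivAt (fun y : ℝ => 1 - y^2) (-(2*x)) x := by
    simpa using ((hasDerivAt_pow 2 x).const_sub 1)
  have hrp := hbase.rpow_const (p := α) (Or.inl (ne_of_gt h0x))
  have hprod := hrp.mul (pexp_raise j α x)
  have hEq := hlow.unique hprod
  have hne : ((1:ℝ)-x^2)^(α-1) ≠ 0 := (Real.rpow_pos_of_pos h0x _).ne'
  have hsplit : ((1:ℝ)-x^2)^α = (1-x^2)^(α-1) * (1-x^2) := by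
    have h := Real.rpow_add h0x (α-1) 1
    rw [Real.rpow_one, sub_add_cancel] at h
    exact h
  rw [hsplit] at hEq
  push_cast at hEq
  simp only [show j+1+1 = j+2 from rfl] at hEq
  apply mul_left_cancel₀ hne
  linear_combination -hEq
lemma pexp_one (α x : ℝ) : Pexp 1 α x = (α+1)*x := by
  simp [Pexp, ccoef, poch, Finset.sum_range_succ]
  ring

noncomputable def alb (d b : ℕ) : ℝ := (b:ℝ) + ((d:ℝ)-2)/2

noncomputable def Kc (d ℓ' b : ℕ) : ℝ :=
  cConst ((ℓ':ℝ) + ((d:ℝ)-1)/2) (alb d b) ^ 2 * Dk (d-1) b / sigmaS (d-1)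

noncomputable def Gfun (d ℓ' b : ℕ) (y : ℝ) : ℝ :=
  Kc d ℓ' b * ((1-y^2)^b * Pexp (ℓ'-b) (alb d b) y ^ 2)

noncomputable def Hfun (d ℓ' b : ℕ) (y : ℝ) : ℝ :=
  (4 * Kc d ℓ' b * (b:ℝ) * ((ℓ':ℝ)-(b:ℝ)+1) / (2*(b:ℝ)+(d:ℝ)-2)) *
    ((1-y^2)^(b-1) * Pexp (ℓ'+1-b) (alb d b - 1) y * Pexp (ℓ'-b) (alb d b) y)

lemma Hfun_zero (d ℓ' : ℕ) (y : ℝ) : Hfun d ℓ' 0 y = 0 := by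
  simp [Hfun]

lemma Hfun_top (d ℓ' : ℕ) (y : ℝ) : Hfun d ℓ' (ℓ'+1) y = 0 := by
  unfold Hfun
  rw [show ((ℓ':ℝ) - ((ℓ'+1 : ℕ):ℝ) + 1) = 0 by push_cast; ring]
  ring

lemma hbase' (x : ℝ) : HasDerivAt (fun y : ℝ => 1 - y^2) (-(2*x)) x := by
  simpa using ((hasDerivAt_pow 2 x).const_sub 1)

lemma alb_succ (d b : ℕ) : alb d b + 1 = alb d (b+1) := by
  unfold alb; push_cast; ring

-- case b = ℓ' = 0
lemma Gfun_deriv_zz (d : ℕ) (x : ℝ) :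
    HasDerivAt (Gfun d 0 0) (Hfun d 0 1 x - Hfun d 0 0 x) x := by
  have hfun : Gfun d 0 0 = fun _ => Kc d 0 0 := by
    funext y; simp [Gfun, pexp_zero]
  rw [hfun, Hfun_zero, show (1:ℕ) = 0 + 1 from rfl, Hfun_top]
  simpa using hasDerivAt_const x (Kc d 0 0)

-- case b = ℓ' ≥ 1
lemma Gfun_deriv_top (d ℓ' : ℕ) (hd : 2 ≤ d) (hl : 1 ≤ ℓ') {x : ℝ} (hx : x ∈ Ioo (-1:ℝ) 1) :
    HasDerivAt (Gfun d ℓ' ℓ') (Hfun d ℓ' (ℓ'+1) x - Hfun d ℓ' ℓ' x) x := by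
  have hfun : Gfun d ℓ' ℓ' = fun y => Kc d ℓ' ℓ' * ((1-y^2)^ℓ' * 1) := by
    funext y; simp [Gfun, pexp_zero]
  rw [hfun, Hfun_top]
  have h1 : HasDerivAt (fun y : ℝ => Kc d ℓ' ℓ' * ((1-y^2)^ℓ' * 1))
      (Kc d ℓ' ℓ' * ((ℓ':ℝ) * (1-x^2)^(ℓ'-1) * (-(2*x)) * 1)) x := by
    have := ((hbase' x).pow ℓ').const_mul (Kc d ℓ' ℓ')
    simpa [mul_assoc] using this
  convert h1 using 1
  unfold Hfun
  rw [Nat.sub_self, pexp_zero, show ℓ'+1-ℓ' = 1 by omega, pexp_one]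
  have hden : 2*(ℓ':ℝ)+(d:ℝ)-2 ≠ 0 := by
    have h1 : (1:ℝ) ≤ (ℓ':ℝ) := by exact_mod_cast hl
    have h2 : (2:ℝ) ≤ (d:ℝ) := by exact_mod_cast hd
    nlinarith
  unfold alb
  have hden2 : (ℓ':ℝ)*2+(d:ℝ)-2 ≠ 0 := by contrapose! hden; linarith
  field_simp
  ring

-- case b = 0 < ℓ'
lemma Gfun_deriv_bot (d ℓ' : ℕ) (hd : 2 ≤ d) (hl : 1 ≤ ℓ')
    (hK0 : (d:ℝ)*((ℓ':ℝ)+(d:ℝ)-1)*Kc d ℓ' 0 = 4*(ℓ':ℝ)*Kc d ℓ' 1)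
    {x : ℝ} (hx : x ∈ Ioo (-1:ℝ) 1) :
    HasDerivAt (Gfun d ℓ' 0) (Hfun d ℓ' 1 x - Hfun d ℓ' 0 x) x := by
  have hQ : HasDerivAt (Pexp (ℓ'-0) (alb d 0))
      (((2*(alb d 0) + ((ℓ'-1 : ℕ):ℝ) + 2)/2) * Pexp (ℓ'-1) (alb d 0 + 1) x) x := by
    have h := pexp_raise (ℓ'-1) (alb d 0) x
    rw [show (ℓ'-1)+1 = ℓ'-0 by omega] at h
    exact h
  have h1 : HasDerivAt (Gfun d ℓ' 0)
      (Kc d ℓ' 0 * ((0:ℝ) * (1-x^2)^(0-1) * (-(2*x)) * Pexp (ℓ'-0) (alb d 0) x ^ 2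
        + (1-x^2)^(0:ℕ) * (2 * Pexp (ℓ'-0) (alb d 0) x
            * (((2*(alb d 0) + ((ℓ'-1 : ℕ):ℝ) + 2)/2) * Pexp (ℓ'-1) (alb d 0 + 1) x)))) x := by
    have := (((hbase' x).pow 0).mul (hQ.pow 2)).const_mul (Kc d ℓ' 0)
    refine this.congr_deriv ?_
    simp only [Pi.pow_apply]
    push_cast
    ring
  convert h1 using 1
  rw [Hfun_zero]
  unfold Hfun
  rw [show ℓ'+1-1 = ℓ'-0 by omega, show alb d 1 - 1 = alb d 0 by unfold alb; push_cast; ring,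
    show (1:ℕ)-1 = 0 from rfl, alb_succ d 0]
  rw [Nat.cast_sub hl]
  have hdne : (d:ℝ) ≠ 0 := by positivity
  rw [show (2:ℝ) * alb d 0 = (d:ℝ)-2 by unfold alb; push_cast; ring]
  simp only [Nat.sub_zero]
  push_cast
  have hd2' : (2:ℝ)+(d:ℝ)-2 ≠ 0 := by contrapose! hdne; linarith
  field_simp
  linear_combination (-Pexp ℓ' (alb d 0) x * Pexp (ℓ'-1) (alb d 1) x) * hK0

-- case 1 ≤ b < ℓ'
lemma Gfun_deriv_mid (d ℓ' c : ℕ) (hd : 2 ≤ d) (hb : c+1 < ℓ')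
    (hKr : ((c:ℝ)+1+(d:ℝ)-2)*((ℓ':ℝ)+((c:ℝ)+1)+(d:ℝ)-1)*(2*((c:ℝ)+1)+(d:ℝ))*Kc d ℓ' (c+1)
      = 4*((c:ℝ)+2)*((ℓ':ℝ)-((c:ℝ)+1))*(2*((c:ℝ)+1)+(d:ℝ)-2)*Kc d ℓ' (c+2))
    {x : ℝ} (hx : x ∈ Ioo (-1:ℝ) 1) :
    HasDerivAt (Gfun d ℓ' (c+1)) (Hfun d ℓ' (c+2) x - Hfun d ℓ' (c+1) x) x := by
  have h0x : (0:ℝ) < 1 - x^2 := by nlinarith [hx.1, hx.2]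
  have hQ : HasDerivAt (Pexp (ℓ'-(c+1)) (alb d (c+1)))
      (((2*(alb d (c+1)) + ((ℓ'-(c+2) : ℕ):ℝ) + 2)/2) * Pexp (ℓ'-(c+2)) (alb d (c+1) + 1) x) x := by
    have h := pexp_raise (ℓ'-(c+2)) (alb d (c+1)) x
    rw [show (ℓ'-(c+2))+1 = ℓ'-(c+1) by omega] at h
    exact h
  have h1 : HasDerivAt (Gfun d ℓ' (c+1))
      (Kc d ℓ' (c+1) * ((((c:ℝ)+1) * (1-x^2)^c * (-(2*x))) * Pexp (ℓ'-(c+1)) (alb d (c+1)) x ^ 2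
        + (1-x^2)^(c+1) * (2 * Pexp (ℓ'-(c+1)) (alb d (c+1)) x
            * (((2*(alb d (c+1)) + ((ℓ'-(c+2) : ℕ):ℝ) + 2)/2) * Pexp (ℓ'-(c+2)) (alb d (c+1) + 1) x)))) x := by
    have h2 := (((hbase' x).pow (c+1)).mul (hQ.pow 2)).const_mul (Kc d ℓ' (c+1))
    refine h2.congr_deriv ?_
    simp only [Pi.pow_apply]
    push_cast
    ring
  convert h1 using 1
  have hstar := pexp_star (ℓ'-(c+2)) (alb d (c+1)) hx
  rw [show (ℓ'-(c+2))+1 = ℓ'-(c+1) by omega, show (ℓ'-(c+2))+2 = ℓ'-c by omega] at hstar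
  unfold Hfun
  rw [show (c+2)-1 = c+1 from rfl, show (c+1)-1 = c from rfl,
    show ℓ'+1-(c+2) = ℓ'-(c+1) by omega, show ℓ'+1-(c+1) = ℓ'-c by omega,
    show alb d (c+2) - 1 = alb d (c+1) by unfold alb; push_cast; ring,
    show alb d (c+1) - 1 = alb d c by unfold alb; push_cast; ring,
    show alb d (c+2) = alb d (c+1) + 1 from (alb_succ d (c+1)).symm]
  rw [Nat.cast_sub (by omega : c+2 ≤ ℓ')] at hstar
  rw [Nat.cast_sub (by omega : c+2 ≤ ℓ')]
  rw [show alb d (c+1) - 1 = alb d c by unfold alb; push_cast; ring] at hstar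
  have hne1 : 2*((c:ℝ)+1)+(d:ℝ)-2 ≠ 0 := by
    have : (2:ℝ) ≤ (d:ℝ) := by exact_mod_cast hd
    nlinarith [Nat.cast_nonneg (α := ℝ) c]
  have hne2 : 2*((c:ℝ)+2)+(d:ℝ)-2 ≠ 0 := by
    have : (2:ℝ) ≤ (d:ℝ) := by exact_mod_cast hd
    nlinarith [Nat.cast_nonneg (α := ℝ) c]
  rw [show (2:ℝ) * alb d (c+1) = 2*(c:ℝ)+(d:ℝ) by unfold alb; push_cast; ring] at hstar ⊢
  push_cast at hstar ⊢
  field_simp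
  linear_combination (-(2 * Kc d ℓ' (c+1) * ((c:ℝ)+1) * (2*(c:ℝ)+(d:ℝ)+2) * (1-x^2)^c
      * Pexp (ℓ'-(c+1)) (alb d (c+1)) x)) * hstar
    + (-((1-x^2)^(c+1) * Pexp (ℓ'-(c+1)) (alb d (c+1)) x
      * Pexp (ℓ'-(c+2)) (alb d (c+1) + 1) x)) * hKr
lemma const_on_Ioo {f : ℝ → ℝ} (h : ∀ y ∈ Ioo (-1:ℝ) 1, HasDerivAt f 0 y)
    {a b : ℝ} (ha : a ∈ Ioo (-1:ℝ) 1) (hb : b ∈ Ioo (-1:ℝ) 1) : f a = f b := by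
  apply (convex_Ioo (-1:ℝ) 1).is_const_of_fderivWithin_eq_zero (𝕜 := ℝ)
    (fun y hy => ((h y hy).differentiableAt).differentiableWithinAt) ?_ ha hb
  intro y hy
  rw [fderivWithin_of_isOpen isOpen_Ioo hy, (h y hy).hasFDerivAt.fderiv]
  ext v
  simp

lemma pexp_at_one (j : ℕ) (α : ℝ) :
    Pexp j α 1 = poch (α + (j:ℝ)) j / (j.factorial : ℝ) := by
  unfold Pexp
  rw [Finset.sum_eq_single j]
  · simp only [Nat.sub_self, pow_zero, one_mul, ccoef, Nat.choose_self, Nat.cast_one, poch]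
    norm_num
    have h2 : (2:ℝ)^j ≠ 0 := by positivity
    field_simp
  · intro i hi hne
    have : j - i ≠ 0 := by
      have := Finset.mem_range.mp hi
      omega
    rw [show (1:ℝ) - 1 = 0 by norm_num, zero_pow this]
    ring
  · intro h
    exact absurd (Finset.self_mem_range_succ j) h

lemma gfun_cont (d ℓ' b : ℕ) : Continuous (Gfun d ℓ' b) := by
  unfold Gfun
  exact continuous_const.mul ((((continuous_const.sub (continuous_pow 2)).pow b)).mul
    ((pexp_continuous _ _).pow 2))

lemma Fsum_deriv_zero (d ℓ' : ℕ) (hd : 2 ≤ d)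
    (hK0 : 1 ≤ ℓ' → (d:ℝ)*((ℓ':ℝ)+(d:ℝ)-1)*Kc d ℓ' 0 = 4*(ℓ':ℝ)*Kc d ℓ' 1)
    (hKr : ∀ c : ℕ, c+1 < ℓ' →
      ((c:ℝ)+1+(d:ℝ)-2)*((ℓ':ℝ)+((c:ℝ)+1)+(d:ℝ)-1)*(2*((c:ℝ)+1)+(d:ℝ))*Kc d ℓ' (c+1)
        = 4*((c:ℝ)+2)*((ℓ':ℝ)-((c:ℝ)+1))*(2*((c:ℝ)+1)+(d:ℝ)-2)*Kc d ℓ' (c+2))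
    {x : ℝ} (hx : x ∈ Ioo (-1:ℝ) 1) :
    HasDerivAt (fun y => ∑ b ∈ Finset.range (ℓ'+1), Gfun d ℓ' b y) 0 x := by
  have h : HasDerivAt (fun y => ∑ b ∈ Finset.range (ℓ'+1), Gfun d ℓ' b y)
      (∑ b ∈ Finset.range (ℓ'+1), (Hfun d ℓ' (b+1) x - Hfun d ℓ' b x)) x := by
    apply HasDerivAt.fun_sum
    intro b hb
    have hble : b ≤ ℓ' := by
      have := Finset.mem_range.mp hb; omega
    rcases Nat.eq_zero_or_pos ℓ' with hl0 | hlpos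
    · have hb0 : b = 0 := by omega
      subst hb0; subst hl0
      exact Gfun_deriv_zz d x
    rcases eq_or_lt_of_le hble with heq | hlt
    · subst heq
      exact Gfun_deriv_top d b hd hlpos hx
    rcases Nat.eq_zero_or_pos b with hb0 | hbpos
    · subst hb0
      exact Gfun_deriv_bot d ℓ' hd hlpos (hK0 hlpos) hx
    · obtain ⟨c, rfl⟩ : ∃ c, b = c+1 := ⟨b-1, by omega⟩
      exact Gfun_deriv_mid d ℓ' c hd (by omega) (hKr c (by omega)) hx
  rw [Finset.sum_range_sub (f := fun b => Hfun d ℓ' b x), Hfun_top, Hfun_zero] at h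
  simpa using h

lemma Fval (d ℓ' : ℕ) (hd : 2 ≤ d)
    (hK0 : 1 ≤ ℓ' → (d:ℝ)*((ℓ':ℝ)+(d:ℝ)-1)*Kc d ℓ' 0 = 4*(ℓ':ℝ)*Kc d ℓ' 1)
    (hKr : ∀ c : ℕ, c+1 < ℓ' →
      ((c:ℝ)+1+(d:ℝ)-2)*((ℓ':ℝ)+((c:ℝ)+1)+(d:ℝ)-1)*(2*((c:ℝ)+1)+(d:ℝ))*Kc d ℓ' (c+1)
        = 4*((c:ℝ)+2)*((ℓ':ℝ)-((c:ℝ)+1))*(2*((c:ℝ)+1)+(d:ℝ)-2)*Kc d ℓ' (c+2))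
    {x : ℝ} (hx : x ∈ Ioo (-1:ℝ) 1) :
    ∑ b ∈ Finset.range (ℓ'+1), Gfun d ℓ' b x
      = Kc d ℓ' 0 * (poch ((ℓ':ℝ)+((d:ℝ)-2)/2) ℓ' / (ℓ'.factorial : ℝ))^2 := by
  set F : ℝ → ℝ := fun y => ∑ b ∈ Finset.range (ℓ'+1), Gfun d ℓ' b y with hF
  have hconst : ∀ y ∈ Ioo (-1:ℝ) 1, F y = F x :=
    fun y hy => const_on_Ioo (fun z hz => Fsum_deriv_zero d ℓ' hd hK0 hKr hz) hy hx
  have hcont : Continuous F := by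
    apply continuous_finset_sum
    intro b _
    exact gfun_cont d ℓ' b
  have hne : (nhdsWithin (1:ℝ) (Ioo (-1:ℝ) 1)).NeBot :=
    right_nhdsWithin_Ioo_neBot (by norm_num)
  have h1 : Filter.Tendsto F (nhdsWithin (1:ℝ) (Ioo (-1:ℝ) 1)) (nhds (F 1)) :=
    (hcont.tendsto 1).mono_left nhdsWithin_le_nhds
  have h2 : Filter.Tendsto F (nhdsWithin (1:ℝ) (Ioo (-1:ℝ) 1)) (nhds (F x)) := by
    apply Filter.Tendsto.congr' ?_ tendsto_const_nhds
    filter_upwards [self_mem_nhdsWithin] with y hy using (hconst y hy).symm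
  have hFx : F x = F 1 := (tendsto_nhds_unique h2 h1)
  show F x = _
  rw [hFx, hF]
  simp only []
  have hsum : ∑ b ∈ Finset.range (ℓ'+1), Gfun d ℓ' b 1 = Gfun d ℓ' 0 1 := by
    apply Finset.sum_eq_single 0
    · intro b _ hb0
      unfold Gfun
      rw [show (1:ℝ) - 1^2 = 0 by norm_num, zero_pow hb0]
      ring
    · intro h
      exact absurd (Finset.mem_range.mpr (by omega)) h
  rw [hsum]
  unfold Gfun
  rw [show (1:ℝ) - 1^2 = 0 by norm_num, pow_zero, Nat.sub_zero, pexp_at_one]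
  unfold alb
  push_cast
  ring
lemma sigmaS_pos (k : ℕ) : 0 < sigmaS k := by
  unfold sigmaS
  have h1 : 0 < Real.Gamma (((k:ℝ)+3)/2) := Real.Gamma_pos_of_pos (by positivity)
  have h2 : (0:ℝ) < Real.pi := Real.pi_pos
  positivity

lemma csq (d ℓ' b : ℕ) (hd : 2 ≤ d) (hb : b ≤ ℓ') :
    cConst ((ℓ':ℝ)+((d:ℝ)-1)/2) (alb d b) ^ 2
      = ((ℓ':ℝ)+((d:ℝ)-1)/2) * ((ℓ'-b).factorial : ℝ) * ((ℓ'+b+(d-2)).factorial : ℝ)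
        / (((2:ℝ) ^ (alb d b))^2 * Real.Gamma ((ℓ':ℝ)+(d:ℝ)/2)^2) := by
  unfold cConst
  rw [div_pow, mul_pow]
  have e1 : ((ℓ':ℝ)+((d:ℝ)-1)/2) - (alb d b) + 1/2 = ((ℓ'-b : ℕ):ℝ) + 1 := by
    unfold alb; rw [Nat.cast_sub hb]; ring
  have e2 : ((ℓ':ℝ)+((d:ℝ)-1)/2) + (alb d b) + 1/2 = ((ℓ'+b+(d-2) : ℕ):ℝ) + 1 := by
    unfold alb; push_cast [Nat.cast_sub hd]; ring
  rw [e1, e2, Real.Gamma_nat_eq_factorial, Real.Gamma_nat_eq_factorial,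
    show ((ℓ':ℝ)+((d:ℝ)-1)/2) + 1/2 = (ℓ':ℝ)+(d:ℝ)/2 by ring]
  congr 1
  apply Real.sq_sqrt
  have hL : (0:ℝ) ≤ (ℓ':ℝ)+((d:ℝ)-1)/2 := by
    have h2 : (2:ℝ) ≤ (d:ℝ) := by exact_mod_cast hd
    have := Nat.cast_nonneg (α := ℝ) ℓ'
    linarith
  have f1 : (0:ℝ) ≤ ((ℓ'-b).factorial : ℝ) := Nat.cast_nonneg _
  have f2 : (0:ℝ) ≤ ((ℓ'+b+(d-2)).factorial : ℝ) := Nat.cast_nonneg _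
  exact mul_nonneg (mul_nonneg hL f1) f2

lemma Dk_zero (k : ℕ) : Dk k 0 = 1 := by simp [Dk]

lemma Dk_one (k : ℕ) : Dk k 1 = (k:ℝ)+1 := by
  simp [Dk, Nat.choose_one_right]
  push_cast
  ring

lemma Dk_closed (k c : ℕ) (hk : 1 ≤ k) :
    Dk k (c+1) = (2*((c:ℝ)+1)+(k:ℝ)-1) * ((c+(k-1)).factorial : ℝ)
      / (((c+1).factorial : ℝ) * ((k-1).factorial : ℝ)) := by
  obtain ⟨k0, rfl⟩ : ∃ k0, k = k0+1 := ⟨k-1, by omega⟩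
  simp only [Nat.add_sub_cancel]
  rcases c with _ | e
  · rw [Dk_one]
    simp only [Nat.zero_add, Nat.factorial_one]
    have h1 : ((k0.factorial : ℕ):ℝ) ≠ 0 := Nat.cast_ne_zero.mpr (Nat.factorial_ne_zero _)
    field_simp
    push_cast
    ring
  · unfold Dk
    rw [if_pos (by omega : 2 ≤ e+1+1)]
    rw [Nat.cast_choose ℝ (show e+2 ≤ e+2+(k0+1) by omega)]
    rw [show e+1+1-2 = e by omega, show e+1+1+(k0+1)-2 = e+(k0+1) by omega]
    rw [Nat.cast_choose ℝ (show e ≤ e+(k0+1) by omega)]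
    rw [show e+2+(k0+1)-(e+2) = k0+1 by omega, show e+(k0+1)-e = k0+1 by omega,
        show e+1+1 = e+2 from rfl, show e+1+1+(k0+1) = e+2+(k0+1) from rfl]
    have h1 : ((e+2+(k0+1)).factorial:ℝ)
        = ((e:ℝ)+(k0:ℝ)+3)*((e:ℝ)+(k0:ℝ)+2)*((e+1+k0).factorial:ℝ) := by
      rw [show e+2+(k0+1) = (e+1+k0)+1+1 by omega, Nat.factorial_succ, Nat.factorial_succ]
      push_cast
      ring
    have h2 : ((e+2).factorial:ℝ) = ((e:ℝ)+2)*((e:ℝ)+1)*((e.factorial):ℝ) := by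
      rw [show e+2 = (e+1)+1 from rfl, Nat.factorial_succ, Nat.factorial_succ]
      push_cast
      ring
    have h3 : ((k0+1).factorial:ℝ) = ((k0:ℝ)+1)*((k0.factorial):ℝ) := by
      rw [Nat.factorial_succ]; push_cast; ring
    have h4 : ((e+(k0+1)).factorial:ℝ) = ((e+1+k0).factorial:ℝ) := by
      rw [show e+(k0+1) = e+1+k0 by omega]
    rw [h1, h2, h3, h4]
    have n1 : ((e.factorial):ℝ) ≠ 0 := Nat.cast_ne_zero.mpr (Nat.factorial_ne_zero _)
    have n2 : ((k0.factorial):ℝ) ≠ 0 := Nat.cast_ne_zero.mpr (Nat.factorial_ne_zero _)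
    have n3 : ((e+1+k0).factorial:ℝ) ≠ 0 := Nat.cast_ne_zero.mpr (Nat.factorial_ne_zero _)
    have n4 : ((e+2).factorial:ℝ) ≠ 0 := Nat.cast_ne_zero.mpr (Nat.factorial_ne_zero _)
    push_cast
    field_simp
    ring
lemma Kc_nonzeros (d ℓ' : ℕ) (hd : 2 ≤ d) :
    Real.Gamma ((ℓ':ℝ)+(d:ℝ)/2) ≠ 0 ∧ sigmaS (d-1) ≠ 0 := by
  constructor
  · have : (0:ℝ) < (ℓ':ℝ)+(d:ℝ)/2 := by
      have h2 : (2:ℝ) ≤ (d:ℝ) := by exact_mod_cast hd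
      have := Nat.cast_nonneg (α := ℝ) ℓ'
      linarith
    exact (Real.Gamma_pos_of_pos this).ne'
  · exact (sigmaS_pos _).ne'

set_option maxHeartbeats 1000000 in
lemma hK0_proof (d ℓ' : ℕ) (hd : 2 ≤ d) (hl : 1 ≤ ℓ') :
    (d:ℝ)*((ℓ':ℝ)+(d:ℝ)-1)*Kc d ℓ' 0 = 4*(ℓ':ℝ)*Kc d ℓ' 1 := by
  obtain ⟨hΓ, hσ⟩ := Kc_nonzeros d ℓ' hd
  unfold Kc
  rw [csq d ℓ' 0 hd (Nat.zero_le _), csq d ℓ' 1 hd hl, Dk_zero, Dk_one]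
  have hf1 : ((ℓ'-0).factorial:ℝ) = (ℓ':ℝ)*((ℓ'-1).factorial:ℝ) := by
    rw [show ℓ'-0 = (ℓ'-1)+1 by omega, Nat.factorial_succ]
    push_cast [Nat.cast_sub hl]
    ring
  have hf2 : ((ℓ'+1+(d-2)).factorial:ℝ) = ((ℓ':ℝ)+(d:ℝ)-1)*((ℓ'+0+(d-2)).factorial:ℝ) := by
    rw [show ℓ'+1+(d-2) = (ℓ'+0+(d-2))+1 by omega, Nat.factorial_succ]
    push_cast [Nat.cast_sub hd]
    ring
  have hT : ((2:ℝ)^(alb d 1))^2 = 4*((2:ℝ)^(alb d 0))^2 := by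
    rw [← alb_succ d 0, Real.rpow_add_one (by norm_num : (2:ℝ) ≠ 0)]
    ring
  rw [hf1, hf2, hT, Nat.cast_sub (show 1 ≤ d by omega)]
  have n1 : ((2:ℝ)^(alb d 0))^2 ≠ 0 := by
    have := Real.rpow_pos_of_pos (show (0:ℝ) < 2 by norm_num) (alb d 0)
    positivity
  field_simp
  ring

set_option maxHeartbeats 1000000 in
lemma hKr_proof (d ℓ' c : ℕ) (hd : 2 ≤ d) (hb : c+1 < ℓ') :
    ((c:ℝ)+1+(d:ℝ)-2)*((ℓ':ℝ)+((c:ℝ)+1)+(d:ℝ)-1)*(2*((c:ℝ)+1)+(d:ℝ))*Kc d ℓ' (c+1)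
      = 4*((c:ℝ)+2)*((ℓ':ℝ)-((c:ℝ)+1))*(2*((c:ℝ)+1)+(d:ℝ)-2)*Kc d ℓ' (c+2) := by
  obtain ⟨hΓ, hσ⟩ := Kc_nonzeros d ℓ' hd
  unfold Kc
  rw [csq d ℓ' (c+1) hd (by omega), csq d ℓ' (c+2) hd (by omega),
    Dk_closed (d-1) c (by omega), Dk_closed (d-1) (c+1) (by omega)]
  rw [show d-1-1 = d-2 by omega]
  have hf1 : ((ℓ'-(c+1)).factorial:ℝ) = ((ℓ':ℝ)-(c:ℝ)-1) * ((ℓ'-(c+2)).factorial:ℝ) := by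
    rw [show ℓ'-(c+1) = (ℓ'-(c+2))+1 by omega, Nat.factorial_succ]
    push_cast [Nat.cast_sub (show c+2 ≤ ℓ' by omega)]
    ring
  have hf2 : ((ℓ'+(c+2)+(d-2)).factorial:ℝ)
      = ((ℓ':ℝ)+(c:ℝ)+(d:ℝ)) * ((ℓ'+(c+1)+(d-2)).factorial:ℝ) := by
    rw [show ℓ'+(c+2)+(d-2) = (ℓ'+(c+1)+(d-2))+1 by omega, Nat.factorial_succ]
    push_cast [Nat.cast_sub hd]
    ring
  have hf3 : ((c+1+(d-2)).factorial:ℝ) = ((c:ℝ)+(d:ℝ)-1) * ((c+(d-2)).factorial:ℝ) := by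
    rw [show c+1+(d-2) = (c+(d-2))+1 by omega, Nat.factorial_succ]
    push_cast [Nat.cast_sub hd]
    ring
  have hf4 : ((c+1+1).factorial:ℝ) = ((c:ℝ)+2)*((c+1).factorial:ℝ) := by
    rw [Nat.factorial_succ]; push_cast; ring
  have hT : ((2:ℝ)^(alb d (c+2)))^2 = 4 * ((2:ℝ)^(alb d (c+1)))^2 := by
    rw [← alb_succ d (c+1), Real.rpow_add_one (by norm_num : (2:ℝ) ≠ 0)]
    ring
  rw [hf1, hf2, hf3, hf4, hT, Nat.cast_sub (show 1 ≤ d by omega)]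
  have n1 : ((2:ℝ)^(alb d (c+1)))^2 ≠ 0 := by
    have := Real.rpow_pos_of_pos (show (0:ℝ) < 2 by norm_num) (alb d (c+1))
    positivity
  have n2 : ((c+1).factorial:ℝ) ≠ 0 := Nat.cast_ne_zero.mpr (Nat.factorial_ne_zero _)
  have n3 : ((d-2).factorial:ℝ) ≠ 0 := Nat.cast_ne_zero.mpr (Nat.factorial_ne_zero _)
  push_cast
  field_simp
  ring
lemma poch_gamma (p : ℝ) (i : ℕ) (h : 0 < p + 1 - i) :
    poch p i * Real.Gamma (p + 1 - i) = Real.Gamma (p + 1) := by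
  induction i with
  | zero => simp [poch]
  | succ n ih =>
    have hn : 0 < p + 1 - n := by push_cast at h ⊢; linarith
    have hpn' : 0 < p - (n:ℝ) := by push_cast at h; linarith
    have key : Real.Gamma (p + 1 - n) = (p - n) * Real.Gamma (p - n) := by
      rw [show p + 1 - (n:ℝ) = (p - n) + 1 by ring, Real.Gamma_add_one hpn'.ne']
    rw [show p + 1 - ((n+1:ℕ):ℝ) = p - n by push_cast; ring]
    show poch p n * (p - n) * Real.Gamma (p - n) = _
    rw [mul_assoc, ← key]
    exact ih hn

set_option maxHeartbeats 1000000 in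
lemma final_val (d ℓ' : ℕ) (hd : 2 ≤ d) :
    Kc d ℓ' 0 * (poch ((ℓ':ℝ)+((d:ℝ)-2)/2) ℓ' / (ℓ'.factorial:ℝ))^2 = Dk d ℓ' / sigmaS d := by
  obtain ⟨hΓ, hσ⟩ := Kc_nonzeros d ℓ' hd
  have hd2 : (2:ℝ) ≤ (d:ℝ) := by exact_mod_cast hd
  have hl0 : (0:ℝ) ≤ (ℓ':ℝ) := Nat.cast_nonneg _
  have hΓd2 : Real.Gamma ((d:ℝ)/2) ≠ 0 := (Real.Gamma_pos_of_pos (by linarith)).ne'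
  have hΓd1 : Real.Gamma (((d:ℝ)+1)/2) ≠ 0 := (Real.Gamma_pos_of_pos (by linarith)).ne'
  have hppos : (0:ℝ) < (ℓ':ℝ)+((d:ℝ)-2)/2 + 1 - (ℓ':ℕ) := by linarith
  have hpoch := poch_gamma ((ℓ':ℝ)+((d:ℝ)-2)/2) ℓ' hppos
  rw [show (ℓ':ℝ)+((d:ℝ)-2)/2+1-(ℓ':ℝ) = (d:ℝ)/2 by ring,
      show (ℓ':ℝ)+((d:ℝ)-2)/2+1 = (ℓ':ℝ)+(d:ℝ)/2 by ring] at hpoch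
  have hDk : Dk d ℓ' = (2*(ℓ':ℝ)+(d:ℝ)-1) * ((ℓ'+0+(d-2)).factorial:ℝ)
      /((ℓ'.factorial:ℝ) * (((d-1)).factorial:ℝ)) := by
    have hfd : ((d-1).factorial:ℝ) = ((d:ℝ)-1)*((d-2).factorial:ℝ) := by
      rw [show d-1 = (d-2)+1 by omega, Nat.factorial_succ]
      push_cast [Nat.cast_sub hd]
      ring
    rcases ℓ' with _ | c
    · rw [Dk_zero, show (0:ℕ)+0+(d-2) = d-2 by omega, hfd]
      have n3 : ((d-2).factorial:ℝ) ≠ 0 := Nat.cast_ne_zero.mpr (Nat.factorial_ne_zero _)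
      have n4 : (d:ℝ)-1 ≠ 0 := by linarith
      push_cast
      field_simp
      simp
    · rw [Dk_closed d c (by omega), show c+(d-1) = (c+1)+0+(d-2) by omega]
      push_cast
      ring
  rw [hDk]
  unfold Kc
  rw [csq d ℓ' 0 hd (Nat.zero_le _), Dk_zero]
  unfold sigmaS
  rw [Nat.cast_sub (show 1 ≤ d by omega)]
  push_cast
  have hg1 : Real.Gamma (((d:ℝ)+3)/2) = (((d:ℝ)+1)/2) * Real.Gamma (((d:ℝ)+1)/2) := by
    rw [show ((d:ℝ)+3)/2 = ((d:ℝ)+1)/2 + 1 by ring, Real.Gamma_add_one (by positivity)]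
  have hg2 : Real.Gamma (((d:ℝ)-1+3)/2) = ((d:ℝ)/2) * Real.Gamma ((d:ℝ)/2) := by
    rw [show ((d:ℝ)-1+3)/2 = (d:ℝ)/2 + 1 by ring,
      Real.Gamma_add_one (by intro h0; rw [div_eq_zero_iff] at h0; rcases h0 with h0|h0 <;> linarith)]
  have hdup := Real.Gamma_mul_Gamma_add_half ((d:ℝ)/2)
  rw [show (d:ℝ)/2 + 1/2 = ((d:ℝ)+1)/2 by ring, show 2*((d:ℝ)/2) = (d:ℝ) by ring] at hdup
  have hΓd : Real.Gamma (d:ℝ) = ((d-1).factorial:ℝ) := by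
    rw [show (d:ℝ) = ((d-1:ℕ):ℝ)+1 by rw [Nat.cast_sub (by omega)]; push_cast; ring]
    exact Real.Gamma_nat_eq_factorial _
  rw [hΓd] at hdup
  have hpi1 : Real.pi ^ (((d:ℝ)+1)/2) = Real.pi ^ ((d:ℝ)/2) * Real.sqrt Real.pi := by
    rw [show ((d:ℝ)+1)/2 = (d:ℝ)/2 + 1/2 by ring, Real.rpow_add Real.pi_pos,
      ← Real.sqrt_eq_rpow]
  have hpi2 : Real.pi ^ (((d:ℝ)-1+1)/2) = Real.pi ^ ((d:ℝ)/2) := by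
    rw [show ((d:ℝ)-1+1)/2 = (d:ℝ)/2 by ring]
  have h2p : ((2:ℝ)^(alb d 0))^2 = (2:ℝ)^((d:ℝ)-2) := by
    rw [← Real.rpow_natCast ((2:ℝ)^(alb d 0)) 2, ← Real.rpow_mul (by norm_num : (0:ℝ) ≤ 2)]
    congr 1
    unfold alb
    push_cast
    ring
  have h2c : (2:ℝ)^((d:ℝ)-2) * (2:ℝ)^(1-(d:ℝ)) = 1/2 := by
    rw [← Real.rpow_add (by norm_num : (0:ℝ) < 2), show (d:ℝ)-2+(1-(d:ℝ)) = -1 by ring,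
      show (-1:ℝ) = -(1:ℝ) from rfl, Real.rpow_neg (by norm_num : (0:ℝ) ≤ 2), Real.rpow_one]
    norm_num
  rw [hg1, hg2, hpi1, hpi2, h2p]
  have npi : Real.pi ^ ((d:ℝ)/2) ≠ 0 := (Real.rpow_pos_of_pos Real.pi_pos _).ne'
  have nsq : Real.sqrt Real.pi ≠ 0 := by
    have := Real.sqrt_pos.mpr Real.pi_pos; linarith
  have nfa : ((d-1).factorial:ℝ) ≠ 0 := Nat.cast_ne_zero.mpr (Nat.factorial_ne_zero _)
  have nfl : ((ℓ'.factorial:ℕ):ℝ) ≠ 0 := Nat.cast_ne_zero.mpr (Nat.factorial_ne_zero _)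
  have n2d : (2:ℝ)^((d:ℝ)-2) ≠ 0 := (Real.rpow_pos_of_pos (by norm_num) _).ne'
  have nd1 : (d:ℝ)+1 ≠ 0 := by linarith
  have ndd : (d:ℝ) ≠ 0 := by linarith
  have hdup2 : Real.Gamma ((d:ℝ)/2) * Real.Gamma (((d:ℝ)+1)/2) * (2:ℝ)^((d:ℝ)-2) * 2
      = ((d-1).factorial:ℝ) * Real.sqrt Real.pi := by
    linear_combination 2*(2:ℝ)^((d:ℝ)-2)*hdup + 2*((d-1).factorial:ℝ)*Real.sqrt Real.pi*h2c
  set P := poch ((ℓ':ℝ)+((d:ℝ)-2)/2) ℓ' with hPd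
  set G1 := Real.Gamma ((ℓ':ℝ)+(d:ℝ)/2) with hG1
  set G2 := Real.Gamma ((d:ℝ)/2) with hG2
  set G3 := Real.Gamma (((d:ℝ)+1)/2) with hG3
  set SQ := Real.sqrt Real.pi with hSQ
  set PI := Real.pi ^ ((d:ℝ)/2) with hPI
  set T := (2:ℝ)^((d:ℝ)-2) with hT
  have nd1' : (d:ℝ)-1+1 ≠ 0 := by linarith
  field_simp
  rw [Nat.sub_zero]
  linear_combination
    (-((d:ℝ) * (2*(ℓ':ℝ)+(d:ℝ)-1) * (ℓ'.factorial:ℝ) * P^2 * G2)) * hdup2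
    + (2 * (d:ℝ) * (2*(ℓ':ℝ)+(d:ℝ)-1) * (ℓ'.factorial:ℝ) * T * G3 * (P*G2 + G1)) * hpoch
lemma term_eq (d ℓ' b : ℕ) (hd : 2 ≤ d) (hb : b ≤ ℓ') {x : ℝ} (hx : x ∈ Ioo (-1:ℝ) 1) :
    (1 - x ^ 2) ^ (-((d : ℝ) - 2) / 2) *
        Yfun ((ℓ' : ℝ) + ((d : ℝ) - 1) / 2) ((b : ℝ) + ((d : ℝ) - 2) / 2) x ^ 2 *
        Dk (d - 1) b / sigmaS (d - 1) = Gfun d ℓ' b x := by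
  have h0x : (0:ℝ) < 1 - x^2 := by nlinarith [hx.1, hx.2]
  unfold Yfun Gfun Kc
  have hfl : (ℓ':ℝ)+((d:ℝ)-1)/2 - ((b:ℝ)+((d:ℝ)-2)/2) - 1/2 = ((ℓ'-b : ℕ):ℝ) := by
    rw [Nat.cast_sub hb]; ring
  rw [hfl, Nat.floor_natCast, jacobiP_eq _ _ hx]
  unfold alb
  rw [mul_pow, mul_pow]
  have e1 : (((1:ℝ)-x^2)^(((b:ℝ)+((d:ℝ)-2)/2)/2))^2 = (1-x^2)^((b:ℝ)+((d:ℝ)-2)/2) := by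
    rw [← Real.rpow_natCast ((1-x^2)^(((b:ℝ)+((d:ℝ)-2)/2)/2)) 2, ← Real.rpow_mul h0x.le]
    congr 1
    push_cast
    ring
  rw [e1]
  have e2 : (1-x^2)^(-((d:ℝ)-2)/2) * (1-x^2)^((b:ℝ)+((d:ℝ)-2)/2) = (1-x^2)^(b:ℕ) := by
    rw [← Real.rpow_add h0x, ← Real.rpow_natCast (1-x^2) b]
    congr 1
    ring
  linear_combination (cConst ((ℓ':ℝ)+((d:ℝ)-1)/2) ((b:ℝ)+((d:ℝ)-2)/2)^2
    * Pexp (ℓ'-b) ((b:ℝ)+((d:ℝ)-2)/2) x ^2 * Dk (d-1) b / sigmaS (d-1)) * e2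

theorem stmt17 (d : ℕ) (hd : 2 ≤ d) (ℓ' : ℕ) (x : ℝ) (hx : x ∈ Set.Ioo (-1:ℝ) 1) :
    (∑ b ∈ Finset.range (ℓ' + 1),
      (1 - x ^ 2) ^ (-((d : ℝ) - 2) / 2) *
        Yfun ((ℓ' : ℝ) + ((d : ℝ) - 1) / 2) ((b : ℝ) + ((d : ℝ) - 2) / 2) x ^ 2 *
        Dk (d - 1) b / sigmaS (d - 1))
      = Dk d ℓ' / sigmaS d := by
  have hsum : (∑ b ∈ Finset.range (ℓ' + 1),
      (1 - x ^ 2) ^ (-((d : ℝ) - 2) / 2) *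
        Yfun ((ℓ' : ℝ) + ((d : ℝ) - 1) / 2) ((b : ℝ) + ((d : ℝ) - 2) / 2) x ^ 2 *
        Dk (d - 1) b / sigmaS (d - 1))
      = ∑ b ∈ Finset.range (ℓ' + 1), Gfun d ℓ' b x := by
    apply Finset.sum_congr rfl
    intro b hb
    exact term_eq d ℓ' b hd (by have := Finset.mem_range.mp hb; omega) hx
  rw [hsum, Fval d ℓ' hd (fun hl => hK0_proof d ℓ' hd hl)
    (fun c hc => hKr_proof d ℓ' c hd hc) hx, final_val d ℓ' hd]
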